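/- Let S be a finite set of intervals and I ⊆ S an independent set. If (A, B) induces an alternating path with respect to I, then no interval of A is strictly contained in an interval of B. -/

import Mathlib

open Finset

/-- A nonempty closed interval `[l, r]` on the real line. -/
structure Ivl where
  l : ℝ
  r : ℝ
  hle : l ≤ r

noncomputable instance : DecidableEq Ivl := Classical.decEq _

/-- Two closed intervals intersect (have a common point). -/
def Ivl.meets (x y : Ivl) : Prop := x.l ≤ y.r ∧ y.l ≤ x.r

/-- The interval `y` is strictly contained in the interval `x`. -/
def Ivl.strictIn (y x : Ivl) : Prop := x.l < y.l ∧ y.r < x.r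

/-- `I` is an independent set (a pairwise disjoint subset) of the interval set `S`. -/
def IsIndep (S I : Finset Ivl) : Prop :=
  I ⊆ S ∧ ∀ x ∈ I, ∀ y ∈ I, x ≠ y → ¬ Ivl.meets x y

/-- `α(S)`: the maximum cardinality of an independent set of `S`. -/
noncomputable def alphaIvl (S : Finset Ivl) : ℕ :=
  sSup {n : ℕ | ∃ I : Finset Ivl, IsIndep S I ∧ I.card = n}

/-- `I` is a `k`-maximal independent set of `S`. -/
def IsKMaximal (S : Finset Ivl) (k : ℕ) (I : Finset Ivl) : Prop :=
  IsIndep S I ∧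
  ∀ t, t ≤ k → ∀ A, A ⊆ I → ∀ B, B ⊆ S \ I →
    A.card = t → B.card = t + 1 → ¬ IsIndep S ((I \ A) ∪ B)

/-- `I` is a `k`-valid independent set of `S`: it is `k`-maximal and no interval of
`S \ I` is strictly contained in an interval of `I` (no-containment property). -/
def IsKValid (S : Finset Ivl) (k : ℕ) (I : Finset Ivl) : Prop :=
  IsKMaximal S k I ∧ ∀ y ∈ S \ I, ∀ x ∈ I, ¬ Ivl.strictIn y x

/-- `(A, B)` induces an alternating path with respect to `I`, witnessed by the
left-to-right orderings `a` of `A` and `b` of `B`: `(I \ A) ∪ B` is independent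
and in the intersection graph of `I ∪ B` the set `A ∪ B` induces exactly the path
`b 0, a 0, b 1, a 1, …, a (t-1), b t` (consecutive intervals of this sequence
intersect, all other pairs among `A ∪ B` are disjoint, and no interval of `I \ A`
intersects an interval of `B`). -/
def IsAltPathWith (S I A B : Finset Ivl) (t : ℕ)
    (a : Fin t → Ivl) (b : Fin (t + 1) → Ivl) : Prop :=
  A ⊆ I ∧ B ⊆ S \ I ∧ A.card = t ∧ B.card = t + 1 ∧
  IsIndep S ((I \ A) ∪ B) ∧
  (∀ i, a i ∈ A) ∧ (∀ i, b i ∈ B) ∧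
  Function.Injective a ∧ Function.Injective b ∧
  (∀ i j : Fin t, i < j → (a i).r < (a j).l) ∧
  (∀ i j : Fin (t + 1), i < j → (b i).r < (b j).l) ∧
  (∀ (i : Fin t) (j : Fin (t + 1)),
    Ivl.meets (a i) (b j) ↔ (j = i.castSucc ∨ j = i.succ)) ∧
  (∀ x ∈ I, x ∉ A → ∀ j : Fin (t + 1), ¬ Ivl.meets x (b j))

/-- `(A, B)` induces an alternating path with respect to `I`. -/
def IsAltPath (S I A B : Finset Ivl) : Prop :=
  ∃ t a b, IsAltPathWith S I A B t a b

/-- The alternating path `(A, B)` is smallest: no alternating path `(A', B')`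
with `A' ⊊ A`. -/
def IsSmallestAltPath (S I A B : Finset Ivl) : Prop :=
  IsAltPath S I A B ∧ ¬ ∃ A' B' : Finset Ivl, A' ⊂ A ∧ IsAltPath S I A' B'

/-- The leftmost right endpoint property for the alternating path with orderings
`a`, `b`: each `b (j+1)` has the leftmost right endpoint among all intervals of `S`
whose left endpoint lies in `[r (b j), r (a j)]`, and `b 0` has the leftmost right
endpoint among all intervals of `S` whose left endpoint lies in `[r a', r (a 0))`,
where `a'` is the interval of `I` immediately to the left of `a 0` (the range is
`(-∞, r (a 0))` if no such interval exists). -/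
def LREP (S I : Finset Ivl) (t : ℕ) (a : Fin t → Ivl) (b : Fin (t + 1) → Ivl) : Prop :=
  (∀ j : Fin t,
    ((b j.castSucc).r ≤ (b j.succ).l ∧ (b j.succ).l ≤ (a j).r) ∧
    ∀ y ∈ S, (b j.castSucc).r ≤ y.l → y.l ≤ (a j).r → (b j.succ).r ≤ y.r) ∧
  (∀ h : 0 < t,
    ((∀ x ∈ I, x.r < (a ⟨0, h⟩).l → x.r ≤ (b 0).l) ∧ (b 0).l < (a ⟨0, h⟩).r) ∧
    ∀ y ∈ S, (∀ x ∈ I, x.r < (a ⟨0, h⟩).l → x.r ≤ y.l) → y.l < (a ⟨0, h⟩).r →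
      (b 0).r ≤ y.r)

/-- The rightmost left endpoint property: the mirror image (exchanging the roles of
left and right) of the leftmost right endpoint property `LREP`. -/
def RLEP (S I : Finset Ivl) (t : ℕ) (a : Fin t → Ivl) (b : Fin (t + 1) → Ivl) : Prop :=
  (∀ j : Fin t,
    ((a j).l ≤ (b j.castSucc).r ∧ (b j.castSucc).r ≤ (b j.succ).l) ∧
    ∀ y ∈ S, (a j).l ≤ y.r → y.r ≤ (b j.succ).l → y.l ≤ (b j.castSucc).l) ∧
  (∀ h : 0 < t,
    ((a ⟨t - 1, Nat.sub_lt h Nat.one_pos⟩).l < (b (Fin.last t)).r ∧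
      (∀ x ∈ I, (a ⟨t - 1, Nat.sub_lt h Nat.one_pos⟩).r < x.l →
        (b (Fin.last t)).r ≤ x.l)) ∧
    ∀ y ∈ S, (a ⟨t - 1, Nat.sub_lt h Nat.one_pos⟩).l < y.r →
      (∀ x ∈ I, (a ⟨t - 1, Nat.sub_lt h Nat.one_pos⟩).r < x.l → y.r ≤ x.l) →
      y.l ≤ (b (Fin.last t)).l)

/-- A proper alternating path: a smallest alternating path satisfying the leftmost
right endpoint property. -/
def IsProperAltPath (S I A B : Finset Ivl) : Prop :=
  IsSmallestAltPath S I A B ∧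
  ∀ t a b, IsAltPathWith S I A B t a b → LREP S I t a b

/-- `B` is a left substitute of `A` (with respect to the `k`-valid independent set
`I` of `S`): `|B| = |A|`, the pair `(A, B)` cannot be extended to an alternating
path of sizes `t`, `t + 1` for any `t ≤ 2k`, and, writing `aj` for the rightmost
interval of `A`, if `aj` were not there then `(A \ {aj}, B)` would be a proper
alternating path. -/
def IsLeftSubstitute (S : Finset Ivl) (k : ℕ) (I A B : Finset Ivl) : Prop :=
  A ⊆ I ∧ B ⊆ S \ I ∧ B.card = A.card ∧
  (∀ t, t ≤ 2 * k → ¬ ∃ A'' B'' : Finset Ivl, A ⊆ A'' ∧ B ⊆ B'' ∧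
    A''.card = t ∧ B''.card = t + 1 ∧ IsAltPath S I A'' B'') ∧
  ∃ aj ∈ A, (∀ x ∈ A, x ≠ aj → x.r < aj.l) ∧
    IsProperAltPath (S.erase aj) (I.erase aj) (A.erase aj) B

/-- `B` is a right substitute of `A`: defined symmetrically to `IsLeftSubstitute`,
with the leftmost interval `a1` of `A` in place of the rightmost one. -/
def IsRightSubstitute (S : Finset Ivl) (k : ℕ) (I A B : Finset Ivl) : Prop :=
  A ⊆ I ∧ B ⊆ S \ I ∧ B.card = A.card ∧
  (∀ t, t ≤ 2 * k → ¬ ∃ A'' B'' : Finset Ivl, A ⊆ A'' ∧ B ⊆ B'' ∧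
    A''.card = t ∧ B''.card = t + 1 ∧ IsAltPath S I A'' B'') ∧
  ∃ a1 ∈ A, (∀ x ∈ A, x ≠ a1 → a1.r < x.l) ∧
    IsProperAltPath (S.erase a1) (I.erase a1) (A.erase a1) B

/-- If `(A, B)` induces an alternating path with respect to the independent set `I`,
then no interval of `A` is strictly contained in an interval of `B`. -/
theorem stmt2 (S I A B : Finset Ivl) (hI : IsIndep S I)
    (h : IsAltPath S I A B) :
    ∀ x ∈ A, ∀ y ∈ B, ¬ Ivl.strictIn x y := by
  obtain ⟨t, a, b, hA, hB, hcA, hcB, hind, haA, hbB, hainj, hbinj, haord, hbord,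
    hmeets, hnon⟩ := h
  intro x hx y hy hsi
  obtain ⟨h1, h2⟩ := hsi
  -- a and b are enumerations of A and B
  have hAimg : Finset.image a Finset.univ = A := by
    apply Finset.eq_of_subset_of_card_le
    · intro z hz
      simp only [Finset.mem_image, Finset.mem_univ, true_and] at hz
      obtain ⟨i, hi⟩ := hz
      exact hi ▸ haA i
    · rw [Finset.card_image_of_injective _ hainj, Finset.card_univ, Fintype.card_fin, hcA]
  have hBimg : Finset.image b Finset.univ = B := by
    apply Finset.eq_of_subset_of_card_le
    · intro z hz
      simp only [Finset.mem_image, Finset.mem_univ, true_and] at hz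
      obtain ⟨i, hi⟩ := hz
      exact hi ▸ hbB i
    · rw [Finset.card_image_of_injective _ hbinj, Finset.card_univ, Fintype.card_fin, hcB]
  obtain ⟨i, -, hi⟩ : ∃ i ∈ Finset.univ, a i = x := by
    rw [← hAimg] at hx; exact Finset.mem_image.mp hx
  obtain ⟨j, -, hj⟩ : ∃ j ∈ Finset.univ, b j = y := by
    rw [← hBimg] at hy; exact Finset.mem_image.mp hy
  subst hi hj
  have hm : Ivl.meets (a i) (b j) := ⟨(a i).hle.trans h2.le, h1.le.trans (a i).hle⟩
  rcases (hmeets i j).mp hm with hc | hc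
  · -- j = i.castSucc; use meeting with b i.succ
    have hm2 : Ivl.meets (a i) (b i.succ) := (hmeets i i.succ).mpr (Or.inr rfl)
    have hord : (b i.castSucc).r < (b i.succ).l :=
      hbord i.castSucc i.succ (Fin.castSucc_lt_succ (i := i))
    subst hc
    linarith [hm2.2]
  · -- j = i.succ; use meeting with b i.castSucc
    have hm2 : Ivl.meets (a i) (b i.castSucc) := (hmeets i i.castSucc).mpr (Or.inl rfl)
    have hord : (b i.castSucc).r < (b i.succ).l :=
      hbord i.castSucc i.succ (Fin.castSucc_lt_succ (i := i))
    subst hc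
    linarith [hm2.1]
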